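/- For the gapped order statistics density with gap s and n coordinates on (a,b), the first marginal is Λ^{n,1}_{a,b}(θ) = ((s(n+1)−1)!/((s−1)!(sn−1)!))·(b−a)^{1−s(n+1)}·(b−θ)^{sn−1}·(θ−a)^{s−1} for θ∈(a,b). -/

import Mathlib

open MeasureTheory Set intervalIntegral

lemma beta_nat (q : ℕ) : ∀ (p : ℕ) (c d : ℝ), c ≤ d →
    ∫ t in c..d, (t - c) ^ p * (d - t) ^ q
      = (p.factorial : ℝ) * q.factorial / (p + q + 1).factorial * (d - c) ^ (p + q + 1) := by
  induction q with
  | zero =>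
    intro p c d _
    simp only [pow_zero, mul_one, Nat.factorial_zero, Nat.cast_one, Nat.add_zero]
    rw [intervalIntegral.integral_comp_sub_right (fun x => x ^ p) c, sub_self, integral_pow]
    rw [Nat.factorial_succ]
    push_cast
    rw [zero_pow (by omega)]
    field_simp
    ring
  | succ q ih =>
    intro p c d hcd
    have hu : ∀ x ∈ uIcc c d, HasDerivAt (fun x => (d - x) ^ (q + 1))
        (-((q + 1 : ℝ) * (d - x) ^ q)) x := by
      intro x _
      have h1 : HasDerivAt (fun x : ℝ => d - x) (-1) x := (hasDerivAt_id x).const_sub d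
      have := h1.fun_pow (q + 1)
      refine this.congr_deriv ?_
      push_cast; ring
    have hv : ∀ x ∈ uIcc c d, HasDerivAt (fun x => (x - c) ^ (p + 1) / (p + 1))
        ((x - c) ^ p) x := by
      intro x _
      have h1 : HasDerivAt (fun x : ℝ => x - c) 1 x := (hasDerivAt_id x).sub_const c
      have := (h1.fun_pow (p + 1)).div_const (p + 1)
      refine this.congr_deriv ?_
      have : (p : ℝ) + 1 ≠ 0 := by positivity
      field_simp
      simp
    have hiu : IntervalIntegrable (fun x => -((q + 1 : ℝ) * (d - x) ^ q)) volume c d := by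
      apply Continuous.intervalIntegrable; continuity
    have hiv : IntervalIntegrable (fun x : ℝ => (x - c) ^ p) volume c d := by
      apply Continuous.intervalIntegrable; continuity
    have key := intervalIntegral.integral_mul_deriv_eq_deriv_mul hu hv hiu hiv
    have hcomm : ∫ t in c..d, (t - c) ^ p * (d - t) ^ (q + 1)
        = ∫ t in c..d, (d - t) ^ (q + 1) * (t - c) ^ p := by
      congr 1; ext t; ring
    rw [hcomm, key, sub_self, sub_self, zero_pow (by omega), zero_pow (by omega)]
    have : ∫ x in c..d, -((q + 1 : ℝ) * (d - x) ^ q) * ((x - c) ^ (p + 1) / (p + 1))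
        = (-((q : ℝ) + 1) / (p + 1)) * ∫ x in c..d, (x - c) ^ (p + 1) * (d - x) ^ q := by
      rw [← intervalIntegral.integral_const_mul]
      congr 1; ext x; ring
    rw [this, ih (p + 1) c d hcd]
    have e1 : p + 1 + q + 1 = p + (q + 1) + 1 := by omega
    rw [e1]
    have h2 : ((p + (q + 1) + 1).factorial : ℝ) ≠ 0 := Nat.cast_ne_zero.2 (Nat.factorial_ne_zero _)
    have h3 : ((p : ℝ) + 1) ≠ 0 := by positivity
    rw [Nat.factorial_succ p, Nat.factorial_succ q]
    push_cast
    field_simp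
    ring

noncomputable def CP (s : ℕ) (c d : ℝ) {k : ℕ} (y : Fin k → ℝ) : ℝ :=
  if StrictMono (Fin.cons c (Fin.snoc y d) : Fin (k + 2) → ℝ) then
    ∏ i : Fin (k + 1),
      ((Fin.cons c (Fin.snoc y d) : Fin (k + 2) → ℝ) i.succ
        - (Fin.cons c (Fin.snoc y d) : Fin (k + 2) → ℝ) i.castSucc) ^ (s - 1)
  else 0

lemma strictMono_cons_iff {n : ℕ} {x : ℝ} {g : Fin (n + 1) → ℝ} :
    StrictMono (Fin.cons x g : Fin (n + 2) → ℝ) ↔ x < g 0 ∧ StrictMono g := by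
  simp only [Fin.strictMono_iff_lt_succ]
  constructor
  · intro h
    refine ⟨by simpa using h 0, fun j => ?_⟩
    have := h j.succ
    rwa [Fin.cons_succ, ← Fin.succ_castSucc, Fin.cons_succ] at this
  · rintro ⟨h0, h⟩ i
    induction i using Fin.cases with
    | zero => simpa using h0
    | succ j => rw [← Fin.succ_castSucc, Fin.cons_succ, Fin.cons_succ]; exact h j

lemma CP_cons (s : ℕ) (c d t : ℝ) {k : ℕ} (y : Fin k → ℝ) :
    CP s c d (Fin.cons t y : Fin (k + 1) → ℝ)
      = (if c < t then (t - c) ^ (s - 1) else 0) * CP s t d y := by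
  have hch : (Fin.snoc (Fin.cons t y) d : Fin (k + 2) → ℝ)
      = Fin.cons t (Fin.snoc y d) := (Fin.cons_snoc_eq_snoc_cons t y d).symm
  unfold CP
  rw [hch]
  have hiff : (StrictMono (Fin.cons c (Fin.cons t (Fin.snoc y d)) : Fin (k + 3) → ℝ))
      ↔ c < t ∧ StrictMono (Fin.cons t (Fin.snoc y d) : Fin (k + 2) → ℝ) := by
    rw [strictMono_cons_iff]; simp
  simp only [hiff]
  by_cases h2 : c < t
  · by_cases h3 : StrictMono (Fin.cons t (Fin.snoc y d) : Fin (k + 2) → ℝ)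
    · rw [if_pos (⟨h2, h3⟩ : _ ∧ _), if_pos h2, if_pos h3, Fin.prod_univ_succ]
      simp only [Fin.succ_zero_eq_one, Fin.castSucc_zero, Fin.cons_zero]
      have ht : (Fin.cons c (Fin.cons t (Fin.snoc y d)) : Fin (k + 3) → ℝ) 1 = t := by
        rw [show (1 : Fin (k + 3)) = (0 : Fin (k + 2)).succ from rfl, Fin.cons_succ]
        rfl
      rw [ht]
      congr 1
    · rw [if_neg (by tauto), if_neg h3, mul_zero]
  · rw [if_neg (by tauto), if_neg h2, zero_mul]

lemma meas_chain (c d : ℝ) (k : ℕ) (i : Fin (k + 2)) :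
    Measurable fun y : Fin k → ℝ => (Fin.cons c (Fin.snoc y d) : Fin (k + 2) → ℝ) i := by
  induction i using Fin.cases with
  | zero => simp only [Fin.cons_zero]; exact measurable_const
  | succ j =>
    simp only [Fin.cons_succ]
    induction j using Fin.lastCases with
    | last => simp only [Fin.snoc_last]; exact measurable_const
    | cast j' => simp only [Fin.snoc_castSucc]; exact measurable_pi_apply _

lemma measSet_chain (c d : ℝ) (k : ℕ) :
    MeasurableSet {y : Fin k → ℝ | StrictMono (Fin.cons c (Fin.snoc y d) : Fin (k + 2) → ℝ)} := by
  have : {y : Fin k → ℝ | StrictMono (Fin.cons c (Fin.snoc y d) : Fin (k + 2) → ℝ)}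
      = ⋂ i : Fin (k + 1), {y : Fin k → ℝ |
          (Fin.cons c (Fin.snoc y d) : Fin (k + 2) → ℝ) i.castSucc
            < (Fin.cons c (Fin.snoc y d) : Fin (k + 2) → ℝ) i.succ} := by
    ext y
    simp [Fin.strictMono_iff_lt_succ, Set.mem_iInter]
  rw [this]
  exact MeasurableSet.iInter fun i =>
    measurableSet_lt (meas_chain c d k i.castSucc) (meas_chain c d k i.succ)

lemma CP_eq_indicator (s : ℕ) (c d : ℝ) (k : ℕ) :
    (CP s c d : (Fin k → ℝ) → ℝ)
      = Set.indicator {y : Fin k → ℝ | StrictMono (Fin.cons c (Fin.snoc y d) : Fin (k + 2) → ℝ)}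
          (fun y => ∏ i : Fin (k + 1),
            ((Fin.cons c (Fin.snoc y d) : Fin (k + 2) → ℝ) i.succ
              - (Fin.cons c (Fin.snoc y d) : Fin (k + 2) → ℝ) i.castSucc) ^ (s - 1)) := by
  ext y
  rw [Set.indicator_apply]
  simp only [Set.mem_setOf_eq]
  rfl

lemma CP_measurable (s : ℕ) (c d : ℝ) (k : ℕ) :
    Measurable (CP s c d : (Fin k → ℝ) → ℝ) := by
  rw [CP_eq_indicator]
  exact Measurable.indicator
    (Finset.measurable_prod _ fun i _ =>
      ((meas_chain c d k i.succ).sub (meas_chain c d k i.castSucc)).pow_const _)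
    (measSet_chain c d k)

lemma chain_mem_Icc {c d : ℝ} {k : ℕ} {y : Fin k → ℝ}
    (h : StrictMono (Fin.cons c (Fin.snoc y d) : Fin (k + 2) → ℝ)) (i : Fin (k + 2)) :
    (Fin.cons c (Fin.snoc y d) : Fin (k + 2) → ℝ) i ∈ Set.Icc c d := by
  constructor
  · have := h.monotone (Fin.zero_le i)
    simpa using this
  · have := h.monotone (Fin.le_last i)
    have hl : (Fin.cons c (Fin.snoc y d) : Fin (k + 2) → ℝ) (Fin.last (k + 1)) = d := by
      rw [← Fin.succ_last, Fin.cons_succ, Fin.snoc_last]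
    rwa [hl] at this
  

lemma chain_lt {c d : ℝ} {k : ℕ} {y : Fin k → ℝ}
    (h : StrictMono (Fin.cons c (Fin.snoc y d) : Fin (k + 2) → ℝ)) : c < d := by
  have h0 : (0 : Fin (k + 2)) < Fin.last (k + 1) := by
    rw [Fin.lt_iff_val_lt_val]; simp
  have := h h0
  rw [Fin.cons_zero, ← Fin.succ_last, Fin.cons_succ, Fin.snoc_last] at this
  exact this

lemma CP_integrable (s : ℕ) (c d : ℝ) (k : ℕ) :
    Integrable (CP s c d : (Fin k → ℝ) → ℝ) := by
  set S : Set (Fin k → ℝ) := Set.univ.pi fun _ => Set.Icc c d with hS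
  have hSm : MeasurableSet S := MeasurableSet.univ_pi fun _ => measurableSet_Icc
  set M : ℝ := |d - c| ^ ((s - 1) * (k + 1)) with hM
  have hM0 : 0 ≤ M := by positivity
  have hbound : ∀ y : Fin k → ℝ, ‖CP s c d y‖ ≤ S.indicator (fun _ => M) y := by
    intro y
    by_cases h : StrictMono (Fin.cons c (Fin.snoc y d) : Fin (k + 2) → ℝ)
    · have hyS : y ∈ S := by
        intro j _
        have := chain_mem_Icc h (Fin.castSucc j).succ
        rwa [Fin.cons_succ, Fin.snoc_castSucc] at this
      rw [Set.indicator_of_mem hyS, CP, if_pos h]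
      rw [Real.norm_eq_abs, Finset.abs_prod]
      calc ∏ i : Fin (k + 1), |((Fin.cons c (Fin.snoc y d) : Fin (k + 2) → ℝ) i.succ
              - (Fin.cons c (Fin.snoc y d) : Fin (k + 2) → ℝ) i.castSucc) ^ (s - 1)|
          ≤ ∏ _i : Fin (k + 1), |d - c| ^ (s - 1) := by
            apply Finset.prod_le_prod (fun i _ => abs_nonneg _)
            intro i _
            rw [abs_pow]
            apply pow_le_pow_left₀ (abs_nonneg _)
            have h1 := chain_mem_Icc h i.succ
            have h2 := chain_mem_Icc h i.castSucc
            rw [abs_le]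
            constructor
            · have := chain_lt h
              nlinarith [h1.1, h1.2, h2.1, h2.2, abs_nonneg (d - c),
                le_abs_self (d - c)]
            · have : (Fin.cons c (Fin.snoc y d) : Fin (k + 2) → ℝ) i.succ
                  - (Fin.cons c (Fin.snoc y d) : Fin (k + 2) → ℝ) i.castSucc ≤ d - c := by
                linarith [h1.2, h2.1]
              linarith [le_abs_self (d - c)]
        _ = M := by rw [Finset.prod_const, Finset.card_univ, Fintype.card_fin, hM, pow_mul]
    · rw [CP, if_neg h, norm_zero]
      exact Set.indicator_apply_nonneg fun _ => hM0
  have hInt : Integrable (S.indicator fun _ => M) := by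
    rw [integrable_indicator_iff hSm]
    refine integrableOn_const (ne_of_lt ?_)
    exact ((isCompact_univ_pi fun _ => isCompact_Icc).measure_lt_top)
  exact hInt.mono' (CP_measurable s c d k).aestronglyMeasurable
    (Filter.Eventually.of_forall hbound)

lemma integral_cons_eq {k : ℕ} (f : (Fin (k + 1) → ℝ) → ℝ) (hf : Integrable f) :
    ∫ y : Fin (k + 1) → ℝ, f y = ∫ t : ℝ, ∫ y : Fin k → ℝ, f (Fin.cons t y) := by
  have hmp := (MeasureTheory.volume_preserving_piFinSuccAbove (fun _ : Fin (k + 1) => ℝ) 0).symm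
  rw [← hmp.integral_comp']
  have hint : Integrable (fun p : ℝ × (Fin k → ℝ) =>
      f ((MeasurableEquiv.piFinSuccAbove (fun _ : Fin (k + 1) => ℝ) 0).symm p)) := by
    exact (hmp.integrable_comp_emb (MeasurableEquiv.measurableEmbedding _)).2 hf
  rw [Measure.volume_eq_prod] at hint ⊢
  rw [MeasureTheory.integral_prod _ hint]
  congr 1
  ext t
  congr 1
  ext y
  congr 1
  show Fin.insertNth (α := fun _ : Fin (k + 1) => ℝ) 0 t y = Fin.cons t y
  simp [Fin.insertNth_zero]

lemma CP_integral (s : ℕ) (hs : 1 ≤ s) (k : ℕ) : ∀ (c d : ℝ), c < d →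
    ∫ y : Fin k → ℝ, CP s c d y
      = ((s - 1).factorial : ℝ) ^ (k + 1) / ((s * (k + 1) - 1).factorial : ℝ)
        * (d - c) ^ (s * (k + 1) - 1) := by
  induction k with
  | zero =>
    intro c d hcd
    have hv : (volume (Set.univ : Set (Fin 0 → ℝ))).toReal = 1 := by
      rw [MeasureTheory.volume_pi, MeasureTheory.Measure.pi_univ]
      simp
    have key : ∀ y : Fin 0 → ℝ, CP s c d y = (d - c) ^ (s - 1) := by
      intro y
      have hg0 : (Fin.snoc y d : Fin (0 + 1) → ℝ) 0 = d := rfl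
      have hsm : StrictMono (Fin.cons c (Fin.snoc y d) : Fin (0 + 2) → ℝ) := by
        rw [strictMono_cons_iff, hg0]
        exact ⟨hcd, fun a b hab => absurd (Fin.lt_iff_val_lt_val.1 hab) (by omega)⟩
      rw [CP]
      split_ifs with hif
      swap
      · exact absurd hsm hif
      rw [Fin.prod_univ_one, Fin.cons_succ, hg0]
      simp
    simp_rw [key]
    rw [MeasureTheory.integral_const, measureReal_def, hv, one_smul]
    have hf : ((s - 1).factorial : ℝ) ≠ 0 := Nat.cast_ne_zero.2 (Nat.factorial_ne_zero _)
    norm_num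
    field_simp
  | succ k ih =>
    intro c d hcd
    set A := s * (k + 1) with hA
    have hA1 : 1 ≤ A := Nat.one_le_iff_ne_zero.2 (by positivity)
    set C : ℝ := ((s - 1).factorial : ℝ) ^ (k + 1) / ((A - 1).factorial : ℝ) with hC
    rw [integral_cons_eq _ (CP_integrable s c d (k + 1))]
    have hpt : ∀ t : ℝ, ∫ y : Fin k → ℝ, CP s c d (Fin.cons t y)
        = Set.indicator (Set.Ioo c d)
            (fun t => C * ((t - c) ^ (s - 1) * (d - t) ^ (A - 1))) t := by
      intro t
      simp_rw [CP_cons]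
      rw [MeasureTheory.integral_const_mul]
      simp only [Set.indicator_apply, Set.mem_Ioo]
      by_cases h1 : c < t
      · by_cases h2 : t < d
        · rw [if_pos h1, if_pos ⟨h1, h2⟩, ih t d h2]
          ring
        · rw [if_pos h1, if_neg (by tauto)]
          have hz : ∀ y : Fin k → ℝ, CP s t d y = 0 := by
            intro y
            rw [CP, if_neg]
            intro hsm
            exact h2 (chain_lt hsm)
          simp only [hz, MeasureTheory.integral_zero, mul_zero]
      · rw [if_neg h1, if_neg (by tauto), zero_mul]
    rw [show (fun t : ℝ => ∫ y : Fin k → ℝ, CP s c d (Fin.cons t y))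
        = Set.indicator (Set.Ioo c d)
            (fun t => C * ((t - c) ^ (s - 1) * (d - t) ^ (A - 1))) from funext hpt]
    rw [MeasureTheory.integral_indicator measurableSet_Ioo,
      ← MeasureTheory.integral_Ioc_eq_integral_Ioo,
      ← intervalIntegral.integral_of_le hcd.le,
      intervalIntegral.integral_const_mul,
      beta_nat (A - 1) (s - 1) c d hcd.le]
    have he : (s - 1) + (A - 1) + 1 = A + s - 1 := by omega
    have he2 : s * (k + 1 + 1) - 1 = A + s - 1 := by
      rw [Nat.mul_succ]
    rw [he, he2, hC]
    have hf1 : ((s - 1).factorial : ℝ) ≠ 0 := Nat.cast_ne_zero.2 (Nat.factorial_ne_zero _)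
    have hf2 : ((A - 1).factorial : ℝ) ≠ 0 := Nat.cast_ne_zero.2 (Nat.factorial_ne_zero _)
    have hf3 : ((A + s - 1).factorial : ℝ) ≠ 0 := Nat.cast_ne_zero.2 (Nat.factorial_ne_zero _)
    rw [pow_succ]
    field_simp
    ring

/-- Joint density of the gapped order statistics with gap size `s` and `k` coordinates
on `(a,b)`. -/
noncomputable def GapD (s : ℕ) (a b : ℝ) (k : ℕ) (θ : Fin k → ℝ) : ℝ :=
  if StrictMono (Fin.cons a (Fin.snoc θ b) : Fin (k + 2) → ℝ) then
    ((s * (k + 1) - 1).factorial : ℝ) / ((s - 1).factorial : ℝ) ^ (k + 1)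
      / (b - a) ^ (s * (k + 1) - 1) *
      ∏ i : Fin (k + 1),
        ((Fin.cons a (Fin.snoc θ b) : Fin (k + 2) → ℝ) i.succ
          - (Fin.cons a (Fin.snoc θ b) : Fin (k + 2) → ℝ) i.castSucc) ^ (s - 1)
  else 0

lemma GapD_eq_CP (s : ℕ) (a b : ℝ) (k : ℕ) (z : Fin k → ℝ) :
    GapD s a b k z
      = ((s * (k + 1) - 1).factorial : ℝ) / ((s - 1).factorial : ℝ) ^ (k + 1)
          / (b - a) ^ (s * (k + 1) - 1) * CP s a b z := by
  rw [GapD, CP]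
  split_ifs with h
  · rfl
  · rw [mul_zero]

theorem stmt13 (s m : ℕ) (hs : 1 ≤ s) (a b : ℝ) (hab : a < b) (θ : ℝ)
    (hθ : θ ∈ Set.Ioo a b) :
    ∫ y : Fin m → ℝ, GapD s a b (m + 1) (Fin.cons θ y)
      = ((s * (m + 2) - 1).factorial : ℝ)
          / ((s - 1).factorial * (s * (m + 1) - 1).factorial : ℕ)
          / (b - a) ^ (s * (m + 2) - 1)
          * (b - θ) ^ (s * (m + 1) - 1) * (θ - a) ^ (s - 1) := by
  have hfun : (fun y : Fin m → ℝ => GapD s a b (m + 1) (Fin.cons θ y))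
      = fun y => (((s * (m + 1 + 1) - 1).factorial : ℝ)
          / ((s - 1).factorial : ℝ) ^ (m + 1 + 1) / (b - a) ^ (s * (m + 1 + 1) - 1)
          * (θ - a) ^ (s - 1)) * CP s θ b y := by
    funext y
    rw [GapD_eq_CP, CP_cons, if_pos hθ.1]
    ring
  rw [hfun, MeasureTheory.integral_const_mul, CP_integral s hs m θ b hθ.2]
  have hm : m + 1 + 1 = m + 2 := rfl
  rw [hm]
  have hf1 : ((s - 1).factorial : ℝ) ≠ 0 := Nat.cast_ne_zero.2 (Nat.factorial_ne_zero _)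
  have hf2 : ((s * (m + 1) - 1).factorial : ℝ) ≠ 0 := Nat.cast_ne_zero.2 (Nat.factorial_ne_zero _)
  have hba : (b - a) ^ (s * (m + 2) - 1) ≠ 0 := pow_ne_zero _ (by linarith [hab] : b - a ≠ 0)
  push_cast
  field_simp
  ring
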